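/- arXiv:0902.2150 — 5 statements merged into one kernel-verified Lean document; each statement's English description precedes it below -/
import Mathlib

section
/- Let H be a connected graph with girth at least 6 whose square G = H² is not a complete graph. Then for every vertex v of H with degree at least 2 in H, the closed neighborhood N_H[v] is a maximal clique in G. -/
open SimpleGraph

variable {V : Type*}

/-- The square of a graph: `x` and `y` are adjacent iff `1 ≤ d_H(x,y) ≤ 2`. -/
def graphSq (H : SimpleGraph V) : SimpleGraph V where
  Adj x y := x ≠ y ∧ (H.Adj x y ∨ ∃ z, H.Adj x z ∧ H.Adj z y)
  symm := by
    constructor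
    rintro x y ⟨hxy, h | ⟨z, h1, h2⟩⟩
    · exact ⟨hxy.symm, Or.inl h.symm⟩
    · exact ⟨hxy.symm, Or.inr ⟨z, h2.symm, h1.symm⟩⟩
  loopless := ⟨fun x h => h.1 rfl⟩

/-- `Q` is a maximal clique of `G`. -/
def IsMaxClique (G : SimpleGraph V) (Q : Set V) : Prop :=
  G.IsClique Q ∧ ∀ R : Set V, G.IsClique R → Q ⊆ R → R = Q

/-- `xy` is a forced edge of `G`: it lies in at least two distinct maximal cliques. -/
def Forced (G : SimpleGraph V) (x y : V) : Prop :=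
  G.Adj x y ∧ ∃ Q₁ Q₂ : Set V, Q₁ ≠ Q₂ ∧ IsMaxClique G Q₁ ∧ IsMaxClique G Q₂ ∧
    x ∈ Q₁ ∧ y ∈ Q₁ ∧ x ∈ Q₂ ∧ y ∈ Q₂

/-- The subgraph of `G` consisting of all forced edges. -/
def forcedSubgraph (G : SimpleGraph V) : SimpleGraph V where
  Adj := Forced G
  symm := by
    constructor
    rintro x y ⟨hadj, Q₁, Q₂, hne, h1, h2, hx1, hy1, hx2, hy2⟩
    exact ⟨hadj.symm, Q₁, Q₂, hne, h1, h2, hy1, hx1, hy2, hx2⟩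
  loopless := ⟨fun x h => h.1.ne rfl⟩

/-- `H` contains no cycle of length 3 and no cycle of length 5. -/
def C3C5Free (H : SimpleGraph V) : Prop :=
  ∀ (v : V) (w : H.Walk v v), w.IsCycle → w.length ≠ 3 ∧ w.length ≠ 5

/-- The set `S` induces a star in `F`: at least two vertices, a center adjacent to
all others, and the non-center vertices pairwise non-adjacent. -/
def IsStarOn (F : SimpleGraph V) (S : Set V) : Prop :=
  S.Nontrivial ∧ ∃ c ∈ S, (∀ x ∈ S, x ≠ c → F.Adj c x) ∧
    ∀ x ∈ S, ∀ y ∈ S, x ≠ c → y ≠ c → x ≠ y → ¬ F.Adj x y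

lemma cycle_len_ge {H : SimpleGraph V} (hg : 6 ≤ H.girth) {a : V} (w : H.Walk a a)
    (hc : w.IsCycle) : 6 ≤ w.length := by
  have h1 : H.egirth ≤ w.length := le_egirth.mp le_rfl a w hc
  have h2 := ENat.toNat_le_toNat h1 (by simp)
  simp [SimpleGraph.girth] at hg h2
  omega

lemma no_tri {H : SimpleGraph V} (hg : 6 ≤ H.girth) {a b c : V}
    (hab : H.Adj a b) (hbc : H.Adj b c) (hca : H.Adj c a) : False := by
  have hcyc : (Walk.cons hab (Walk.cons hbc (Walk.cons hca Walk.nil))).IsCycle := by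
    simp [Walk.isCycle_def, Walk.isTrail_def, hab.ne, hbc.ne, hca.ne, hab.ne',
      hbc.ne', hca.ne']
  have := cycle_len_ge hg _ hcyc
  simp at this

lemma no_c4 {H : SimpleGraph V} (hg : 6 ≤ H.girth) {a b c d : V}
    (hac : a ≠ c) (hbd : b ≠ d)
    (hab : H.Adj a b) (hbc : H.Adj b c) (hcd : H.Adj c d) (hda : H.Adj d a) : False := by
  have hcyc : (Walk.cons hab (Walk.cons hbc (Walk.cons hcd (Walk.cons hda Walk.nil)))).IsCycle := by
    simp [Walk.isCycle_def, Walk.isTrail_def, hab.ne, hbc.ne, hcd.ne, hda.ne, hab.ne',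
      hbc.ne', hcd.ne', hda.ne', hac, hbd, hac.symm, hbd.symm]
  have := cycle_len_ge hg _ hcyc
  simp at this

lemma no_c5 {H : SimpleGraph V} (hg : 6 ≤ H.girth) {a b c d e : V}
    (hac : a ≠ c) (had : a ≠ d) (hbd : b ≠ d) (hbe : b ≠ e) (hce : c ≠ e)
    (hab : H.Adj a b) (hbc : H.Adj b c) (hcd : H.Adj c d) (hde : H.Adj d e)
    (hea : H.Adj e a) : False := by
  have hcyc : (Walk.cons hab (Walk.cons hbc (Walk.cons hcd (Walk.cons hde
      (Walk.cons hea Walk.nil))))).IsCycle := by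
    simp [Walk.isCycle_def, Walk.isTrail_def, hab.ne, hbc.ne, hcd.ne, hde.ne, hea.ne,
      hab.ne', hbc.ne', hcd.ne', hde.ne', hea.ne',
      hac, had, hbd, hbe, hce, hac.symm, had.symm, hbd.symm, hbe.symm, hce.symm]
  have := cycle_len_ge hg _ hcyc
  simp at this

theorem stmt0 [Fintype V] (H : SimpleGraph V) [DecidableRel H.Adj]
    (hconn : H.Connected) (hgirth : 6 ≤ H.girth) (hnc : graphSq H ≠ ⊤)
    (v : V) (hdeg : 2 ≤ H.degree v) :
    IsMaxClique (graphSq H) (insert v (H.neighborSet v)) := by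
  constructor
  · intro x hx y hy hxy
    simp only [Set.mem_insert_iff, mem_neighborSet] at hx hy
    rcases hx with rfl | hx
    · rcases hy with rfl | hy
      · exact absurd rfl hxy
      · exact ⟨hxy, Or.inl hy⟩
    · rcases hy with rfl | hy
      · refine ⟨hxy, Or.inl ?_⟩
        exact hx.symm
      · exact ⟨hxy, Or.inr ⟨v, hx.symm, hy⟩⟩
  · intro R hR hsub
    ext u
    refine ⟨fun hu => ?_, fun hu => hsub hu⟩
    by_contra hun
    simp only [Set.mem_insert_iff, mem_neighborSet] at hun
    push_neg at hun
    obtain ⟨huv, hunbr⟩ := hun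
    have hvR : v ∈ R := hsub (Set.mem_insert _ _)
    obtain ⟨-, h⟩ := hR hu hvR huv
    rcases h with h | ⟨z, huz, hzv⟩
    · exact hunbr h.symm
    · -- pick a neighbor w of v with w ≠ z
      have hzmem : z ∈ H.neighborFinset v := by
        rw [mem_neighborFinset]; exact hzv.symm
      have hcard : 1 < (H.neighborFinset v).card := by
        unfold SimpleGraph.degree at hdeg; omega
      obtain ⟨w, hwmem, hwz⟩ := Finset.exists_mem_ne hcard z
      rw [mem_neighborFinset] at hwmem
      have hwR : w ∈ R := hsub (Set.mem_insert_of_mem _ hwmem)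
      have huw : u ≠ w := fun h => hunbr (h ▸ hwmem)
      obtain ⟨-, h2⟩ := hR hu hwR huw
      rcases h2 with h2 | ⟨t, hut, htw⟩
      · -- C4: u z v w
        exact no_c4 hgirth huv hwz.symm huz hzv hwmem h2.symm
      · rcases eq_or_ne t v with rfl | htv
        · exact hunbr hut.symm
        · rcases eq_or_ne t z with rfl | htz
          · -- triangle z v w
            exact no_tri hgirth hzv hwmem htw.symm
          · -- C5: u z v w t
            exact no_c5 hgirth huv huw hwz.symm (Ne.symm htz) (Ne.symm htv) huz hzv hwmem
              htw.symm hut.symm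
end

section
/- Let H be a connected graph with girth at least 7 whose square G = H² is not complete, and let F be the spanning subgraph of G consisting of all forced edges (edges lying in at least two distinct maximal cliques of G). Then F is equal to the graph obtained from H by deleting all vertices of degree 1 in H. -/
open SimpleGraph

variable {V : Type*}

section Aux

variable {H : SimpleGraph V}

lemma noC3 (hg7 : ∀ ⦃u : V⦄ (w : H.Walk u u), w.IsCycle → 7 ≤ w.length)
    {a b c : V} (hab : H.Adj a b) (hbc : H.Adj b c) (hac : H.Adj a c) : False := by
  have h := hg7 (Walk.cons hab (Walk.cons hbc (Walk.cons hac.symm Walk.nil))) ?_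
  · simp at h
  · simp [Walk.isCycle_def, Walk.isTrail_def, hab.ne, hbc.ne, hac.ne, hab.ne', hbc.ne', hac.ne']

lemma noC4 (hg7 : ∀ ⦃u : V⦄ (w : H.Walk u u), w.IsCycle → 7 ≤ w.length)
    {a b c d : V} (hab : H.Adj a b) (hbc : H.Adj b c) (hcd : H.Adj c d) (had : H.Adj a d)
    (hac : a ≠ c) (hbd : b ≠ d) : False := by
  have h := hg7 (Walk.cons hab (Walk.cons hbc (Walk.cons hcd (Walk.cons had.symm Walk.nil)))) ?_
  · simp at h
  · simp [Walk.isCycle_def, Walk.isTrail_def, hab.ne, hbc.ne, hcd.ne, had.ne,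
      hab.ne', hbc.ne', hcd.ne', had.ne', hac, hbd, hac.symm, hbd.symm]

lemma noC5 (hg7 : ∀ ⦃u : V⦄ (w : H.Walk u u), w.IsCycle → 7 ≤ w.length)
    {a b c d e : V} (hab : H.Adj a b) (hbc : H.Adj b c) (hcd : H.Adj c d) (hde : H.Adj d e)
    (hae : H.Adj a e) (hac : a ≠ c) (had : a ≠ d) (hbd : b ≠ d) (hbe : b ≠ e) (hce : c ≠ e) :
    False := by
  have h := hg7 (Walk.cons hab (Walk.cons hbc (Walk.cons hcd (Walk.cons hde
    (Walk.cons hae.symm Walk.nil))))) ?_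
  · simp at h
  · simp [Walk.isCycle_def, Walk.isTrail_def, hab.ne, hbc.ne, hcd.ne, hde.ne, hae.ne,
      hab.ne', hbc.ne', hcd.ne', hde.ne', hae.ne', hac, had, hbd, hbe, hce,
      hac.symm, had.symm, hbd.symm, hbe.symm, hce.symm]

lemma noC6 (hg7 : ∀ ⦃u : V⦄ (w : H.Walk u u), w.IsCycle → 7 ≤ w.length)
    {a b c d e f : V} (hab : H.Adj a b) (hbc : H.Adj b c) (hcd : H.Adj c d) (hde : H.Adj d e)
    (hef : H.Adj e f) (haf : H.Adj a f) (hac : a ≠ c) (had : a ≠ d) (hae : a ≠ e)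
    (hbd : b ≠ d) (hbe : b ≠ e) (hbf : b ≠ f) (hce : c ≠ e) (hcf : c ≠ f) (hdf : d ≠ f) :
    False := by
  have h := hg7 (Walk.cons hab (Walk.cons hbc (Walk.cons hcd (Walk.cons hde
    (Walk.cons hef (Walk.cons haf.symm Walk.nil)))))) ?_
  · simp at h
  · simp [Walk.isCycle_def, Walk.isTrail_def, hab.ne, hbc.ne, hcd.ne, hde.ne, hef.ne, haf.ne,
      hab.ne', hbc.ne', hcd.ne', hde.ne', hef.ne', haf.ne', hac, had, hae, hbd, hbe, hbf,
      hce, hcf, hdf, hac.symm, had.symm, hae.symm, hbd.symm, hbe.symm, hbf.symm,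
      hce.symm, hcf.symm, hdf.symm]

/-- closed neighborhood as a set -/
def Nb (H : SimpleGraph V) (v : V) : Set V := {u | u = v ∨ H.Adj v u}

lemma self_mem_Nb {v : V} : v ∈ Nb H v := Or.inl rfl

lemma adj_mem_Nb {v u : V} (h : H.Adj v u) : u ∈ Nb H v := Or.inr h

lemma clique_Nb (v : V) : (graphSq H).IsClique (Nb H v) := by
  rintro a (rfl | ha) b (rfl | hb) hne
  · exact absurd rfl hne
  · exact ⟨hne, Or.inl hb⟩
  · exact ⟨hne, Or.inl ha.symm⟩
  · exact ⟨hne, Or.inr ⟨v, ha.symm, hb⟩⟩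

lemma unique_common (hg7 : ∀ ⦃u : V⦄ (w : H.Walk u u), w.IsCycle → 7 ≤ w.length)
    {x y m p : V} (hxm : H.Adj x m) (hmy : H.Adj m y)
    (hxp : H.Adj x p) (hpy : H.Adj p y) (hxy : x ≠ y) (hmp : m ≠ p) : False :=
  noC4 hg7 hxm hmy hpy.symm hxp hxy hmp

lemma edge_mem (hg7 : ∀ ⦃u : V⦄ (w : H.Walk u u), w.IsCycle → 7 ≤ w.length)
    {Q : Set V} (hQ : (graphSq H).IsClique Q) {x y z : V}
    (hx : x ∈ Q) (hy : y ∈ Q) (hz : z ∈ Q) (hxy : H.Adj x y) :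
    z ∈ Nb H x ∨ z ∈ Nb H y := by
  by_cases hzx : z = x
  · exact Or.inl (Or.inl hzx)
  by_cases hzy : z = y
  · exact Or.inr (Or.inl hzy)
  obtain ⟨-, hx1 | ⟨p, hxp, hpz⟩⟩ := hQ hx hz (Ne.symm hzx)
  · exact Or.inl (adj_mem_Nb hx1)
  obtain ⟨-, hy1 | ⟨q, hyq, hqz⟩⟩ := hQ hy hz (Ne.symm hzy)
  · exact Or.inr (adj_mem_Nb hy1)
  by_cases hpy : p = y
  · subst hpy; exact Or.inr (adj_mem_Nb hpz)
  by_cases hqx : q = x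
  · subst hqx; exact Or.inl (adj_mem_Nb hqz)
  by_cases hpq : p = q
  · subst hpq; exact absurd (noC3 hg7 hxy hyq hxp) id
  · exact absurd (noC5 hg7 hpz.symm hxp.symm hxy hyq hqz.symm hzx hzy hpy hpq
      (fun h => hqx h.symm)) id

lemma edge_dichotomy (hg7 : ∀ ⦃u : V⦄ (w : H.Walk u u), w.IsCycle → 7 ≤ w.length)
    {Q : Set V} (hQ : (graphSq H).IsClique Q) {x y : V}
    (hx : x ∈ Q) (hy : y ∈ Q) (hxy : H.Adj x y) :
    Q ⊆ Nb H x ∨ Q ⊆ Nb H y := by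
  by_contra hcon
  rw [not_or, Set.not_subset, Set.not_subset] at hcon
  obtain ⟨⟨z1, hz1Q, hz1x⟩, ⟨z2, hz2Q, hz2y⟩⟩ := hcon
  have hz1y : H.Adj y z1 := by
    rcases edge_mem hg7 hQ hx hy hz1Q hxy with h | h
    · exact absurd h hz1x
    · rcases h with rfl | h
      · exact absurd (adj_mem_Nb hxy) hz1x
      · exact h
  have hz2x : H.Adj x z2 := by
    rcases edge_mem hg7 hQ hx hy hz2Q hxy with h | h
    · rcases h with rfl | h
      · exact absurd (adj_mem_Nb hxy.symm) hz2y
      · exact h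
    · exact absurd h hz2y
  have hz12 : z1 ≠ z2 := fun h => hz1x (h ▸ adj_mem_Nb hz2x)
  have hz1nex : z1 ≠ x := fun h => hz1x (Or.inl h)
  have hz2ney : z2 ≠ y := fun h => hz2y (Or.inl h)
  obtain ⟨-, h12 | ⟨r, h1r, hr2⟩⟩ := hQ hz1Q hz2Q hz12
  · exact noC4 hg7 hz1y.symm hxy.symm hz2x h12 hz1nex (fun h => hz2ney h.symm)
  · by_cases hrx : r = x
    · subst hrx; exact hz1x (adj_mem_Nb h1r.symm)
    by_cases hry : r = y
    · subst hry; exact hz2y (adj_mem_Nb hr2)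
    exact noC5 hg7 hz1y.symm hxy.symm hz2x hr2.symm h1r hz1nex hz12
      (fun h => hz2ney h.symm) (fun h => hry h.symm) (fun h => hrx h.symm)

lemma dist2_subset (hg7 : ∀ ⦃u : V⦄ (w : H.Walk u u), w.IsCycle → 7 ≤ w.length)
    {Q : Set V} (hQ : (graphSq H).IsClique Q) {x y m : V}
    (hx : x ∈ Q) (hy : y ∈ Q) (hxy : x ≠ y) (hnadj : ¬H.Adj x y)
    (hxm : H.Adj x m) (hmy : H.Adj m y) : Q ⊆ Nb H m := by
  intro z hzQ
  by_cases hzm : z = m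
  · exact Or.inl hzm
  by_cases hzx : z = x
  · subst hzx; exact adj_mem_Nb hxm.symm
  by_cases hzy : z = y
  · subst hzy; exact adj_mem_Nb hmy
  obtain ⟨-, hx1 | ⟨p, hxp, hpz⟩⟩ := hQ hx hzQ (Ne.symm hzx) <;>
    obtain ⟨-, hy1 | ⟨q, hyq, hqz⟩⟩ := hQ hy hzQ (Ne.symm hzy)
  · -- z~x and z~y
    exact absurd (noC4 hg7 hx1.symm hxm hmy hy1.symm hzm hxy) id
  · -- z~x, y-q-z
    by_cases hqm : q = m
    · subst hqm; exact adj_mem_Nb hqz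
    by_cases hqx : q = x
    · subst hqx; exact absurd hyq.symm hnadj
    exact absurd (noC5 hg7 hx1.symm hxm hmy hyq hqz.symm hzm hzy hxy
      (fun h => hqx h.symm) (fun h => hqm h.symm)) id
  · -- x-p-z, z~y
    by_cases hpm : p = m
    · subst hpm; exact adj_mem_Nb hpz
    by_cases hpy : p = y
    · subst hpy; exact absurd hxp hnadj
    exact absurd (noC5 hg7 hy1.symm hmy.symm hxm.symm hxp hpz.symm hzm hzx
      (fun h => hxy h.symm) (fun h => hpy h.symm) (fun h => hpm h.symm)) id
  · -- x-p-z, y-q-z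
    by_cases hpm : p = m
    · subst hpm; exact adj_mem_Nb hpz
    by_cases hqm : q = m
    · subst hqm; exact adj_mem_Nb hqz
    by_cases hpy : p = y
    · subst hpy; exact absurd hxp hnadj
    by_cases hqx : q = x
    · subst hqx; exact absurd hyq.symm hnadj
    by_cases hpq : p = q
    · subst hpq; exact absurd (unique_common hg7 hxm hmy hxp hyq.symm hxy
        (fun h => hpm h.symm)) id
    exact absurd (noC6 hg7 hpz.symm hxp.symm hxm hmy hyq hqz.symm hzx hzm hzy
      (fun h => hpm h) hpy hpq hxy (fun h => hqx h.symm) (fun h => hqm h.symm)) id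

lemma max_Nb [Fintype V] [DecidableRel H.Adj]
    (hg7 : ∀ ⦃u : V⦄ (w : H.Walk u u), w.IsCycle → 7 ≤ w.length)
    {x : V} (hdeg : 2 ≤ H.degree x) : IsMaxClique (graphSq H) (Nb H x) := by
  obtain ⟨a, ha, b, hb, hab⟩ := Finset.one_lt_card.mp hdeg
  rw [SimpleGraph.mem_neighborFinset] at ha hb
  refine ⟨clique_Nb x, fun R hR hsub => Set.Subset.antisymm (fun z hz => ?_) hsub⟩
  by_contra hzNb
  have hzx : z ≠ x := fun h => hzNb (Or.inl h)
  have key : ∀ c, H.Adj x c → H.Adj c z := by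
    intro c hc
    rcases edge_mem hg7 hR (hsub self_mem_Nb) (hsub (adj_mem_Nb hc)) hz hc with h | h
    · exact absurd h hzNb
    · rcases h with rfl | h
      · exact absurd (adj_mem_Nb hc) hzNb
      · exact h
  exact unique_common hg7 ha (key a ha) hb (key b hb) (Ne.symm hzx) hab

lemma two_le_degree_of_max [Fintype V] [DecidableRel H.Adj] {x y : V} (hxy : H.Adj x y)
    (hmax : IsMaxClique (graphSq H) (Nb H x)) (hne : Nb H x ≠ Nb H y) : 2 ≤ H.degree x := by
  by_contra h
  push_neg at h
  have h1 : ∀ u, H.Adj x u → u = y := by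
    intro u hu
    have hu' : u ∈ H.neighborFinset x := by simpa using hu
    have hy' : y ∈ H.neighborFinset x := by simpa using hxy
    exact Finset.card_le_one.mp (by omega : H.degree x ≤ 1) u hu' y hy'
  have hsub : Nb H x ⊆ Nb H y := by
    rintro u (rfl | hu)
    · exact adj_mem_Nb hxy.symm
    · rw [h1 u hu]; exact self_mem_Nb
  exact hne (hmax.2 (Nb H y) (clique_Nb y) hsub).symm

lemma Nb_ne (hg7 : ∀ ⦃u : V⦄ (w : H.Walk u u), w.IsCycle → 7 ≤ w.length)
    {x y b : V} (hxy : H.Adj x y) (hxb : H.Adj x b) (hby : b ≠ y) : Nb H x ≠ Nb H y := by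
  intro h
  have : b ∈ Nb H y := h ▸ adj_mem_Nb hxb
  rcases this with rfl | hyb
  · exact hby rfl
  · exact noC3 hg7 hxy hyb hxb

lemma forced_iff [Fintype V] [DecidableRel H.Adj]
    (hg7 : ∀ ⦃u : V⦄ (w : H.Walk u u), w.IsCycle → 7 ≤ w.length) (x y : V) :
    Forced (graphSq H) x y ↔ (H.Adj x y ∧ 2 ≤ H.degree x ∧ 2 ≤ H.degree y) := by
  constructor
  · rintro ⟨hadj, Q₁, Q₂, hQne, hM1, hM2, hx1, hy1, hx2, hy2⟩
    have hxy : x ≠ y := hadj.ne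
    have hH : H.Adj x y := by
      by_contra hn
      rcases hadj.2 with h | ⟨m, hxm, hmy⟩
      · exact hn h
      · have e1 := hM1.2 _ (clique_Nb m) (dist2_subset hg7 hM1.1 hx1 hy1 hxy hn hxm hmy)
        have e2 := hM2.2 _ (clique_Nb m) (dist2_subset hg7 hM2.1 hx2 hy2 hxy hn hxm hmy)
        exact hQne (e1.symm.trans e2)
    have key : ∀ Q : Set V, IsMaxClique (graphSq H) Q → x ∈ Q → y ∈ Q →
        Q = Nb H x ∨ Q = Nb H y := by
      intro Q hM hxQ hyQ
      rcases edge_dichotomy hg7 hM.1 hxQ hyQ hH with h | h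
      · exact Or.inl (hM.2 _ (clique_Nb x) h).symm
      · exact Or.inr (hM.2 _ (clique_Nb y) h).symm
    have main : ∀ Q₁ Q₂ : Set V, Q₁ ≠ Q₂ → IsMaxClique (graphSq H) Q₁ →
        IsMaxClique (graphSq H) Q₂ → Q₁ = Nb H x → Q₂ = Nb H y →
        (2 ≤ H.degree x ∧ 2 ≤ H.degree y) := by
      intro Q₁ Q₂ hQne hM1 hM2 h1 h2
      subst h1; subst h2
      exact ⟨two_le_degree_of_max hH hM1 hQne,
        two_le_degree_of_max hH.symm hM2 (Ne.symm hQne)⟩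
    rcases key Q₁ hM1 hx1 hy1 with h1 | h1 <;> rcases key Q₂ hM2 hx2 hy2 with h2 | h2
    · exact absurd (h1.trans h2.symm) hQne
    · exact ⟨hH, main Q₁ Q₂ hQne hM1 hM2 h1 h2⟩
    · obtain ⟨hdx, hdy⟩ := main Q₂ Q₁ (Ne.symm hQne) hM2 hM1 h2 h1
      exact ⟨hH, hdx, hdy⟩
    · exact absurd (h1.trans h2.symm) hQne
  · rintro ⟨hH, hdx, hdy⟩
    obtain ⟨b, hb, hby⟩ := Finset.exists_mem_ne hdx y
    rw [SimpleGraph.mem_neighborFinset] at hb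
    exact ⟨⟨hH.ne, Or.inl hH⟩, Nb H x, Nb H y, Nb_ne hg7 hH hb hby,
      max_Nb hg7 hdx, max_Nb hg7 hdy, self_mem_Nb, adj_mem_Nb hH, adj_mem_Nb hH.symm,
      self_mem_Nb⟩

end Aux

theorem stmt3 [Fintype V] (H : SimpleGraph V) [DecidableRel H.Adj]
    (hconn : H.Connected) (hgirth : 7 ≤ H.girth) (hnc : graphSq H ≠ ⊤) :
    (∀ x y : V, (forcedSubgraph (graphSq H)).Adj x y ↔
        (H.Adj x y ∧ 2 ≤ H.degree x ∧ 2 ≤ H.degree y)) ∧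
    (forcedSubgraph (graphSq H)).support = {v : V | 2 ≤ H.degree v} := by
  have hg7 : ∀ ⦃u : V⦄ (w : H.Walk u u), w.IsCycle → 7 ≤ w.length := by
    intro u w hw
    by_contra hlen
    push_neg at hlen
    have h1 : H.egirth ≤ (w.length : ℕ∞) := le_egirth.mp le_rfl u w hw
    have h2 : H.girth ≤ w.length := by
      have := ENat.toNat_le_toNat h1 (by simp : (w.length : ℕ∞) ≠ ⊤)
      simpa [SimpleGraph.girth] using this
    omega
  constructor
  · exact fun x y => forced_iff hg7 x y
  · ext v
    simp only [mem_support, Set.mem_setOf_eq]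
    constructor
    · rintro ⟨w, hw⟩
      exact ((forced_iff hg7 v w).mp hw).2.1
    · intro hdv
      by_contra hcon
      push_neg at hcon
      have hnb : ∀ w, H.Adj v w → H.degree w ≤ 1 := by
        intro w hw
        by_contra h2
        push_neg at h2
        exact hcon w ((forced_iff hg7 v w).mpr ⟨hw, hdv, h2⟩)
      have step : ∀ u w, u ∈ Nb H v → H.Adj u w → w ∈ Nb H v := by
        rintro u w (rfl | hu) huw
        · exact adj_mem_Nb huw
        · have hw' : w ∈ H.neighborFinset u := by simpa using huw
          have hv' : v ∈ H.neighborFinset u := by simpa using hu.symm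
          have h1 := Finset.card_le_one.mp (hnb u hu) w hw' v hv'
          rw [h1]; exact self_mem_Nb
      have all : ∀ u, u ∈ Nb H v := by
        intro u
        obtain ⟨p⟩ := hconn.preconnected v u
        have walkin : ∀ {a b : V} (_ : H.Walk a b), a ∈ Nb H v → b ∈ Nb H v := by
          intro a b p
          induction p with
          | nil => exact id
          | cons h q ih => exact fun ha => ih (step _ _ ha h)
        exact walkin p self_mem_Nb
      apply hnc
      ext u w
      show (u ≠ w ∧ (H.Adj u w ∨ ∃ z, H.Adj u z ∧ H.Adj z w)) ↔ (⊤ : SimpleGraph V).Adj u w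
      rw [top_adj]
      constructor
      · exact fun h => h.1
      · intro huw
        rcases all u with rfl | hu
        · rcases all w with rfl | hw
          · exact absurd rfl huw
          · exact ⟨huw, Or.inl hw⟩
        · rcases all w with rfl | hw
          · exact ⟨huw, Or.inl hu.symm⟩
          · exact ⟨huw, Or.inr ⟨v, hu.symm, hw⟩⟩
end

section
/- Let H be a graph with girth at least 7 and G = H², with G connected and not complete. Then every edge of H joining two vertices each of degree at least 2 in H belongs to exactly two distinct maximal cliques of G. -/
open SimpleGraph

variable {V : Type*}

variable {H : SimpleGraph V}


lemma girth_le_len {a : V} (w : H.Walk a a) (hw : w.IsCycle) : H.girth ≤ w.length := by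
  have h : H.egirth ≤ w.length := le_egirth.mp le_rfl a w hw
  have := ENat.toNat_le_toNat h (by simp)
  simpa [girth] using this

lemma noC3_s6 (hg : 7 ≤ H.girth) {a b c : V} (h1 : H.Adj a b) (h2 : H.Adj b c) (h3 : H.Adj c a) : False := by
  have hw : (Walk.cons h1 (Walk.cons h2 (Walk.cons h3 Walk.nil))).IsCycle := by
    refine ⟨⟨⟨?_⟩, by simp⟩, ?_⟩
    · have := h1.ne; have := h2.ne; have := h3.ne
      simp [Walk.edges, List.nodup_cons, Sym2.eq_iff]; aesop
    · have := h1.ne; have := h2.ne; have := h3.ne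
      simp [Walk.support]; aesop
  have := girth_le_len _ hw
  simp at this; omega

lemma noC4_s6 (hg : 7 ≤ H.girth) {a b c d : V} (hac : a ≠ c) (hbd : b ≠ d)
    (h1 : H.Adj a b) (h2 : H.Adj b c) (h3 : H.Adj c d) (h4 : H.Adj d a) : False := by
  have hw : (Walk.cons h1 (Walk.cons h2 (Walk.cons h3 (Walk.cons h4 Walk.nil)))).IsCycle := by
    refine ⟨⟨⟨?_⟩, by simp⟩, ?_⟩
    · have := h1.ne; have := h2.ne; have := h3.ne; have := h4.ne
      simp [Walk.edges, List.nodup_cons, Sym2.eq_iff]; aesop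
    · have := h1.ne; have := h2.ne; have := h3.ne; have := h4.ne
      simp [Walk.support]; aesop
  have := girth_le_len _ hw
  simp at this; omega

lemma noC5_s6 (hg : 7 ≤ H.girth) {a b c d e : V} (hac : a ≠ c) (had : a ≠ d) (hbd : b ≠ d)
    (hbe : b ≠ e) (hce : c ≠ e)
    (h1 : H.Adj a b) (h2 : H.Adj b c) (h3 : H.Adj c d) (h4 : H.Adj d e) (h5 : H.Adj e a) : False := by
  have hw : (Walk.cons h1 (Walk.cons h2 (Walk.cons h3 (Walk.cons h4 (Walk.cons h5 Walk.nil))))).IsCycle := by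
    refine ⟨⟨⟨?_⟩, by simp⟩, ?_⟩
    · have := h1.ne; have := h2.ne; have := h3.ne; have := h4.ne; have := h5.ne
      simp [Walk.edges, List.nodup_cons, Sym2.eq_iff]; aesop
    · have := h1.ne; have := h2.ne; have := h3.ne; have := h4.ne; have := h5.ne
      simp [Walk.support]; aesop
  have := girth_le_len _ hw
  simp at this; omega


/-- closed neighborhood -/
def NN (H : SimpleGraph V) (x : V) : Set V := {v | v = x ∨ H.Adj x v}

lemma clique_NN (hg : 7 ≤ H.girth) (x : V) : (graphSq H).IsClique (NN H x) := by
  rintro a (rfl | ha) b (rfl | hb) hab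
  · exact absurd rfl hab
  · exact ⟨hab, Or.inl hb⟩
  · exact ⟨hab, Or.inl ha.symm⟩
  · exact ⟨hab, Or.inr ⟨x, ha.symm, hb⟩⟩

lemma maxclique_NN (hg : 7 ≤ H.girth) {x y x' : V} (hxy : H.Adj x y) (hx' : H.Adj x x')
    (hne : x' ≠ y) :
    (graphSq H).IsClique (NN H x) ∧
      ∀ R : Set V, (graphSq H).IsClique R → NN H x ⊆ R → R = NN H x := by
  refine ⟨clique_NN hg x, fun R hR hsub => ?_⟩
  ext r
  refine ⟨fun hr => ?_, fun h => hsub h⟩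
  by_contra hrn
  have hrx : r ≠ x := fun h => hrn (h ▸ Or.inl rfl)
  have hrax : ¬ H.Adj x r := fun h => hrn (Or.inr h)
  have hxR : x ∈ R := hsub (Or.inl rfl)
  have hyR : y ∈ R := hsub (Or.inr hxy)
  have hx'R : x' ∈ R := hsub (Or.inr hx')
  have hry : r ≠ y := fun h => hrn (h ▸ Or.inr hxy)
  have hrx' : r ≠ x' := fun h => hrn (h ▸ Or.inr hx')
  obtain ⟨-, hadj⟩ := hR hr hxR hrx
  obtain ⟨z, hrz, hzx⟩ : ∃ z, H.Adj r z ∧ H.Adj z x := by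
    rcases hadj with h | h
    · exact absurd h.symm hrax
    · exact h
  by_cases hzy : z = y
  · -- r adj y; use x'
    have hrY : H.Adj r y := hzy ▸ hrz
    obtain ⟨-, hadj'⟩ := hR hr hx'R hrx'
    rcases hadj' with h | ⟨w, hrw, hwx'⟩
    · exact noC4_s6 hg hrx hne h hx'.symm hxy hrY.symm
    · by_cases hwx : w = x
      · exact hrax (hwx ▸ hrw).symm
      by_cases hwy : w = y
      · exact noC3_s6 hg hxy (hwy ▸ hwx') hx'.symm
      · exact noC5_s6 hg hrx hrx' (Ne.symm hne) (fun h => hwy h.symm) (fun h => hwx h.symm)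
          hrY hxy.symm hx' hwx'.symm hrw.symm
  · -- z ≠ y: use y
    obtain ⟨-, hadjy⟩ := hR hr hyR hry
    rcases hadjy with h | ⟨w, hrw, hwy⟩
    · exact noC4_s6 hg hrx hzy hrz hzx hxy h.symm
    · by_cases hwz : w = z
      · exact noC3_s6 hg hzx hxy (hwz ▸ hwy).symm
      by_cases hwx : w = x
      · exact hrax (hwx ▸ hrw).symm
      · exact noC5_s6 hg hrx hry hzy (Ne.symm hwz) (Ne.symm hwx)
          hrz hzx hxy hwy.symm hrw.symm

lemma unique_max (hg : 7 ≤ H.girth) {x y : V} (hxy : H.Adj x y)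
    (Q : Set V) (hQ : (graphSq H).IsClique Q ∧
      ∀ R : Set V, (graphSq H).IsClique R → Q ⊆ R → R = Q)
    (hxQ : x ∈ Q) (hyQ : y ∈ Q) : Q = NN H x ∨ Q = NN H y := by
  -- Step 1: Q ⊆ NN x ∪ NN y
  have hsub : Q ⊆ NN H x ∪ NN H y := by
    intro q hq
    by_contra hqn
    have hq1 : q ∉ NN H x := fun h => hqn (Or.inl h)
    have hq2 : q ∉ NN H y := fun h => hqn (Or.inr h)
    have hqx : q ≠ x := fun h => hq1 (h ▸ Or.inl rfl)
    have hqax : ¬ H.Adj x q := fun h => hq1 (Or.inr h)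
    have hqy : q ≠ y := fun h => hq2 (h ▸ Or.inl rfl)
    have hqay : ¬ H.Adj y q := fun h => hq2 (Or.inr h)
    obtain ⟨-, hadj⟩ := hQ.1 hq hxQ hqx
    obtain ⟨z, hqz, hzx⟩ : ∃ z, H.Adj q z ∧ H.Adj z x := by
      rcases hadj with h | h
      · exact absurd h.symm hqax
      · exact h
    obtain ⟨-, hadj'⟩ := hQ.1 hq hyQ hqy
    obtain ⟨w, hqw, hwy⟩ : ∃ w, H.Adj q w ∧ H.Adj w y := by
      rcases hadj' with h | h
      · exact absurd h.symm hqay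
      · exact h
    have hzy : z ≠ y := fun h => hqay (h ▸ hqz).symm
    have hwx : w ≠ x := fun h => hqax (h ▸ hqw).symm
    have hzw : z ≠ w := fun h => noC3_s6 hg hxy (h ▸ hwy).symm hzx
    exact noC5_s6 hg hqx hqy hzy hzw (Ne.symm hwx) hqz hzx hxy hwy.symm hqw.symm
  -- Step 2: cannot have both a ∈ Q \ NN y and b ∈ Q \ NN x
  have step2 : ∀ a ∈ Q, ∀ b ∈ Q, a ∉ NN H y → b ∉ NN H x → False := by
    intro a haQ b hbQ hay hbx
    have haNx : a ∈ NN H x := (hsub haQ).resolve_right hay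
    have hbNy : b ∈ NN H y := (hsub hbQ).resolve_left hbx
    have hane : a ≠ y := fun h => hay (h ▸ Or.inl rfl)
    have hanay : ¬ H.Adj y a := fun h => hay (Or.inr h)
    have hbne : b ≠ x := fun h => hbx (h ▸ Or.inl rfl)
    have hbnax : ¬ H.Adj x b := fun h => hbx (Or.inr h)
    have hxa : H.Adj x a := by
      rcases haNx with rfl | h
      · exact absurd (Or.inr hxy.symm) hay
      · exact h
    have hyb : H.Adj y b := by
      rcases hbNy with rfl | h
      · exact absurd (Or.inr hxy) hbx
      · exact h
    have hab : a ≠ b := fun h => hbnax (h ▸ hxa)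
    obtain ⟨-, hadj⟩ := hQ.1 haQ hbQ hab
    rcases hadj with h | ⟨c, hac, hcb⟩
    · exact noC4_s6 hg hane hbne h hyb.symm hxy.symm hxa
    · have hcx : c ≠ x := fun h => hbnax (h ▸ hcb)
      have hcy : c ≠ y := fun h => hanay (h ▸ hac).symm
      exact noC5_s6 hg (Ne.symm hcx) (Ne.symm hbne) hab hane hcy hxa hac hcb hyb.symm hxy.symm
  by_cases hall : Q ⊆ NN H y
  · exact Or.inr ((hQ.2 (NN H y) (clique_NN hg y) hall).symm ▸ rfl)
  · left
    have : Q ⊆ NN H x := by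
      intro b hbQ
      by_contra hbx
      obtain ⟨a, haQ, hay⟩ := Set.not_subset.mp hall
      exact step2 a haQ b hbQ hay hbx
    exact (hQ.2 (NN H x) (clique_NN hg x) this).symm ▸ rfl

theorem stmt6 [Fintype V] (H : SimpleGraph V) [DecidableRel H.Adj]
    (hgirth : 7 ≤ H.girth) (hconn : (graphSq H).Connected) (hnc : graphSq H ≠ ⊤)
    (x y : V) (hxy : H.Adj x y) (hx : 2 ≤ H.degree x) (hy : 2 ≤ H.degree y) :
    ∃ Q₁ Q₂ : Set V, Q₁ ≠ Q₂ ∧ IsMaxClique (graphSq H) Q₁ ∧ IsMaxClique (graphSq H) Q₂ ∧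
      x ∈ Q₁ ∧ y ∈ Q₁ ∧ x ∈ Q₂ ∧ y ∈ Q₂ ∧
      ∀ Q : Set V, IsMaxClique (graphSq H) Q → x ∈ Q → y ∈ Q → Q = Q₁ ∨ Q = Q₂ := by
  obtain ⟨x', hx'm, hx'y⟩ : ∃ b ∈ H.neighborFinset x, b ≠ y :=
    Finset.exists_mem_ne (by rw [← H.card_neighborFinset_eq_degree] at hx; omega) y
  obtain ⟨y', hy'm, hy'x⟩ : ∃ b ∈ H.neighborFinset y, b ≠ x :=
    Finset.exists_mem_ne (by rw [← H.card_neighborFinset_eq_degree] at hy; omega) x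
  have hxx' : H.Adj x x' := (H.mem_neighborFinset x x').mp hx'm
  have hyy' : H.Adj y y' := (H.mem_neighborFinset y y').mp hy'm
  refine ⟨NN H x, NN H y, ?_, maxclique_NN hgirth hxy hxx' hx'y,
    maxclique_NN hgirth hxy.symm hyy' hy'x, Or.inl rfl, Or.inr hxy, Or.inr hxy.symm, Or.inl rfl,
    fun Q hQ hxQ hyQ => unique_max hgirth hxy Q hQ hxQ hyQ⟩
  intro h
  have hx'Ny : x' ∈ NN H y := h ▸ Or.inr hxx'
  rcases hx'Ny with h' | h'
  · exact hx'y h'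
  · exact noC3_s6 hgirth hxy h' hxx'.symm
end

section
/- Let H be a graph with girth at least 7 and G = H² connected and not complete. Then any two forced edges of G sharing a common endpoint are contained in a common maximal clique of G. -/
open SimpleGraph

variable {V : Type*}

section Aux

private lemma girth7_cycle' {H : SimpleGraph V} (h7 : 7 ≤ H.girth) {v : V} (w : H.Walk v v)
    (hc : w.IsCycle) : 7 ≤ w.length := by
  have h : (7 : ℕ∞) ≤ H.egirth := by
    rcases eq_or_ne H.egirth ⊤ with h | h
    · simp [h]
    · have : H.egirth = (H.girth : ℕ∞) := (ENat.coe_toNat h).symm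
      rw [this]
      exact_mod_cast h7
  have := le_egirth.mp h v w hc
  exact_mod_cast this

private lemma no4' {H : SimpleGraph V} (h7 : 7 ≤ H.girth) {a b c d : V}
    (hac : a ≠ c) (hbd : b ≠ d)
    (hab : H.Adj a b) (hbc : H.Adj b c) (hcd : H.Adj c d) (hda : H.Adj d a) : False := by
  have hc : (Walk.cons hab (Walk.cons hbc (Walk.cons hcd (Walk.cons hda Walk.nil)))).IsCycle := by
    simp_all [Walk.isCycle_def, Walk.isTrail_def, hab.ne, hbc.ne, hcd.ne, hda.ne,
      hab.ne', hbc.ne', hcd.ne', hda.ne', hac, hbd, hac.symm, hbd.symm, Sym2.eq_iff]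
  have := girth7_cycle' h7 _ hc
  simp [Walk.length_cons] at this

private lemma no5' {H : SimpleGraph V} (h7 : 7 ≤ H.girth) {a b c d e : V}
    (hac : a ≠ c) (had : a ≠ d) (hbd : b ≠ d) (hbe : b ≠ e) (hce : c ≠ e)
    (hab : H.Adj a b) (hbc : H.Adj b c) (hcd : H.Adj c d) (hde : H.Adj d e)
    (hea : H.Adj e a) : False := by
  have hc : (Walk.cons hab (Walk.cons hbc (Walk.cons hcd (Walk.cons hde
      (Walk.cons hea Walk.nil))))).IsCycle := by
    simp_all [Walk.isCycle_def, Walk.isTrail_def, hab.ne, hbc.ne, hcd.ne, hde.ne, hea.ne,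
      hab.ne', hbc.ne', hcd.ne', hde.ne', hea.ne',
      hac, had, hbd, hbe, hce, hac.symm, had.symm, hbd.symm, hbe.symm, hce.symm, Sym2.eq_iff]
  have := girth7_cycle' h7 _ hc
  simp [Walk.length_cons] at this

private lemma no6' {H : SimpleGraph V} (h7 : 7 ≤ H.girth) {a b c d e f : V}
    (hac : a ≠ c) (had : a ≠ d) (hae : a ≠ e) (hbd : b ≠ d) (hbe : b ≠ e) (hbf : b ≠ f)
    (hce : c ≠ e) (hcf : c ≠ f) (hdf : d ≠ f)
    (hab : H.Adj a b) (hbc : H.Adj b c) (hcd : H.Adj c d) (hde : H.Adj d e)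
    (hef : H.Adj e f) (hfa : H.Adj f a) : False := by
  have hc : (Walk.cons hab (Walk.cons hbc (Walk.cons hcd (Walk.cons hde
      (Walk.cons hef (Walk.cons hfa Walk.nil)))))).IsCycle := by
    simp_all [Walk.isCycle_def, Walk.isTrail_def, hab.ne, hbc.ne, hcd.ne, hde.ne, hef.ne, hfa.ne,
      hab.ne', hbc.ne', hcd.ne', hde.ne', hef.ne', hfa.ne',
      hac, had, hae, hbd, hbe, hbf, hce, hcf, hdf,
      hac.symm, had.symm, hae.symm, hbd.symm, hbe.symm, hbf.symm, hce.symm, hcf.symm, hdf.symm,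
      Sym2.eq_iff]
  have := girth7_cycle' h7 _ hc
  simp [Walk.length_cons] at this

private lemma nbhd_clique' (H : SimpleGraph V) (m : V) :
    (graphSq H).IsClique {v | v = m ∨ H.Adj m v} := by
  rintro u (hu | hu) v (hv | hv) huv
  · exact absurd (hu.trans hv.symm) huv
  · subst hu; exact ⟨huv, Or.inl hv⟩
  · subst hv; exact ⟨huv, Or.inl hu.symm⟩
  · exact ⟨huv, Or.inr ⟨m, hu.symm, hv⟩⟩

private lemma exists_maxclique' {G : SimpleGraph V} {S : Set V} (hS : G.IsClique S) :
    ∃ Q : Set V, IsMaxClique G Q ∧ S ⊆ Q := by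
  have hz : ∀ c ⊆ {R : Set V | G.IsClique R}, IsChain (· ⊆ ·) c → c.Nonempty →
      ∃ ub ∈ {R : Set V | G.IsClique R}, ∀ s ∈ c, s ⊆ ub := by
    rintro c hc hchain ⟨s, hs⟩
    refine ⟨⋃₀ c, ?_, fun t ht => Set.subset_sUnion_of_mem ht⟩
    rintro u ⟨t1, ht1, hu⟩ v ⟨t2, ht2, hv⟩ huv
    rcases eq_or_ne t1 t2 with rfl | hne
    · exact hc ht1 hu hv huv
    rcases hchain ht1 ht2 hne with h | h
    · exact hc ht2 (h hu) hv huv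
    · exact hc ht1 hu (h hv) huv
  obtain ⟨Q, hSQ, hQ⟩ := zorn_subset_nonempty {R : Set V | G.IsClique R} hz S hS
  exact ⟨Q, ⟨hQ.1, fun R hR hQR => (hQ.2 hR hQR).antisymm hQR⟩, hSQ⟩

private lemma keyB' {H : SimpleGraph V} (h7 : 7 ≤ H.girth)
    {x y m w : V} (hxy : ¬ H.Adj x y) (hxy0 : x ≠ y)
    (hxm : H.Adj x m) (hmy : H.Adj m y) (hwx : w ≠ x) (hwy : w ≠ y)
    (hax : H.Adj w x ∨ ∃ a, H.Adj w a ∧ H.Adj a x)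
    (hay : H.Adj w y ∨ ∃ b, H.Adj w b ∧ H.Adj b y) :
    w = m ∨ H.Adj m w := by
  by_cases hwm : w = m
  · exact Or.inl hwm
  right
  rcases hax with h1 | ⟨a, hwa, hax⟩ <;> rcases hay with h2 | ⟨b, hwb, hby⟩
  · exact absurd (no4' h7 hwm hxy0 h1 hxm hmy h2.symm) id
  · by_cases hbm : b = m
    · exact hbm ▸ hwb.symm
    by_cases hbx : b = x
    · exact absurd (hbx ▸ hby) hxy
    exact absurd (no5' h7 hwm hwy hxy0 (Ne.symm hbx) (fun h => hbm h.symm)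
      h1 hxm hmy hby.symm hwb.symm) id
  · by_cases ham : a = m
    · exact ham ▸ hwa.symm
    by_cases hay' : a = y
    · exact absurd (hay' ▸ hax).symm hxy
    exact absurd (no5' h7 hwm hwx (Ne.symm hxy0) (Ne.symm hay') (fun h => ham h.symm)
      h2 hmy.symm hxm.symm hax.symm hwa.symm) id
  · by_cases ham : a = m
    · exact ham ▸ hwa.symm
    by_cases hbm : b = m
    · exact hbm ▸ hwb.symm
    by_cases hay' : a = y
    · exact absurd (hay' ▸ hax).symm hxy
    by_cases hbx : b = x
    · exact absurd (hbx ▸ hby) hxy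
    by_cases hab : a = b
    · subst hab
      exact absurd (no4' h7 hxy0 (fun h => ham h.symm) hxm hmy hby.symm hax) id
    exact absurd (no6' h7 hwx hwm hwy ham hay' hab hxy0 (Ne.symm hbx) (fun h => hbm h.symm)
      hwa hax hxm hmy hby.symm hwb.symm) id

private lemma forced_adj {H : SimpleGraph V} (h7 : 7 ≤ H.girth) {x y : V}
    (hf : Forced (graphSq H) x y) : H.Adj x y := by
  obtain ⟨⟨hxy0, hadj⟩, Q₁, Q₂, hne, hQ1, hQ2, hx1, hy1, hx2, hy2⟩ := hf
  by_contra hxy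
  obtain ⟨m, hxm, hmy⟩ : ∃ m, H.Adj x m ∧ H.Adj m y := by
    rcases hadj with h | h
    · exact absurd h hxy
    · exact h
  set N : Set V := {v | v = m ∨ H.Adj m v} with hN
  have hsub : ∀ (Q : Set V), (graphSq H).IsClique Q → x ∈ Q → y ∈ Q → Q ⊆ N := by
    intro Q hQ hx hy w hw
    by_cases hwx : w = x
    · exact Or.inr (hwx ▸ hxm.symm)
    by_cases hwy : w = y
    · exact Or.inr (hwy ▸ hmy)
    have h1 := hQ hw hx hwx
    have h2 := hQ hw hy hwy
    exact keyB' h7 hxy hxy0 hxm hmy hwx hwy h1.2 h2.2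
  have hNc := nbhd_clique' H m
  have e1 : N = Q₁ := hQ1.2 N hNc (hsub Q₁ hQ1.1 hx1 hy1)
  have e2 : N = Q₂ := hQ2.2 N hNc (hsub Q₂ hQ2.1 hx2 hy2)
  exact hne (e1 ▸ e2)

end Aux

theorem stmt7 (H : SimpleGraph V)
    (hgirth : 7 ≤ H.girth) (hconn : (graphSq H).Connected) (hnc : graphSq H ≠ ⊤)
    (x y z : V) (h1 : (forcedSubgraph (graphSq H)).Adj x y)
    (h2 : (forcedSubgraph (graphSq H)).Adj x z) :
    ∃ Q : Set V, IsMaxClique (graphSq H) Q ∧ x ∈ Q ∧ y ∈ Q ∧ z ∈ Q := by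
  have hxy := forced_adj hgirth h1
  have hxz := forced_adj hgirth h2
  have hcl := nbhd_clique' H x
  obtain ⟨Q, hQ, hsub⟩ := exists_maxclique' hcl
  exact ⟨Q, hQ, hsub (Or.inl rfl), hsub (Or.inr hxy), hsub (Or.inr hxz)⟩
end

section
/- Let G be a graph containing vertices a, b, c, d such that: the only neighbors of a in G are b and c; the only neighbors of b in G are a, c, d; and c is adjacent to d in G. Then for any graph H with H² = G, the set of neighbors of d in H outside {a,b,c} equals the set of neighbors of c in G outside {a,b,d}. -/
open SimpleGraph

variable {V : Type*}

theorem stmt13 (G : SimpleGraph V) (a b c d : V)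
    (ha : G.neighborSet a = {b, c}) (hb : G.neighborSet b = {a, c, d})
    (hcd : G.Adj c d) :
    ∀ H : SimpleGraph V, graphSq H = G →
      H.neighborSet d \ {a, b, c} = G.neighborSet c \ {a, b, d} := by
  intro H hG
  subst hG
  have hGA : ∀ x y : V, (graphSq H).Adj x y ↔
      x ≠ y ∧ (H.Adj x y ∨ ∃ z, H.Adj x z ∧ H.Adj z y) := fun _ _ => Iff.rfl
  have haA : ∀ x, (graphSq H).Adj a x ↔ x = b ∨ x = c := by
    intro x
    rw [← SimpleGraph.mem_neighborSet, ha]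
    simp
  have hbA : ∀ x, (graphSq H).Adj b x ↔ x = a ∨ x = c ∨ x = d := by
    intro x
    rw [← SimpleGraph.mem_neighborSet, hb]
    simp
  have hsub : ∀ x y : V, H.Adj x y → (graphSq H).Adj x y :=
    fun x y h => (hGA x y).mpr ⟨h.ne, Or.inl h⟩
  have hNa : ∀ z, H.Adj a z → z = b ∨ z = c := fun z h => (haA z).mp (hsub _ _ h)
  have hNb : ∀ z, H.Adj b z → z = a ∨ z = c ∨ z = d := fun z h => (hbA z).mp (hsub _ _ h)
  have hab : (graphSq H).Adj a b := (haA b).mpr (Or.inl rfl)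
  have hac : (graphSq H).Adj a c := (haA c).mpr (Or.inr rfl)
  have hbc : (graphSq H).Adj b c := (hbA c).mpr (Or.inr (Or.inl rfl))
  have hbd : (graphSq H).Adj b d := (hbA d).mpr (Or.inr (Or.inr rfl))
  have nab : a ≠ b := hab.ne
  have nac : a ≠ c := hac.ne
  have nbc : b ≠ c := hbc.ne
  have nbd : b ≠ d := hbd.ne
  have ncd : c ≠ d := hcd.ne
  have hB : H.Adj a b ∨ H.Adj a c := by
    rcases ((hGA a b).mp hab).2 with h | ⟨z, h1, h2⟩
    · exact Or.inl h
    · rcases hNa z h1 with rfl | rfl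
      · exact Or.inl h1
      · exact Or.inr h1
  by_cases hab' : H.Adj a b
  · -- a–b ∈ H
    have hNb' : ∀ z, H.Adj b z → z = a ∨ z = c := by
      intro z h
      by_cases hz : z = a
      · exact Or.inl hz
      · rcases (haA z).mp ((hGA a z).mpr
          ⟨fun e => hz e.symm, Or.inr ⟨b, hab', h⟩⟩) with rfl | rfl
        · exact absurd rfl h.ne'
        · exact Or.inr rfl
    by_cases hac' : H.Adj a c
    · -- Case I : a–b, a–c ∈ H ; we show d = a and both sides empty
      have hNc' : ∀ z, H.Adj c z → z = a ∨ z = b := by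
        intro z h
        by_cases hz : z = a
        · exact Or.inl hz
        · rcases (haA z).mp ((hGA a z).mpr
            ⟨fun e => hz e.symm, Or.inr ⟨c, hac', h⟩⟩) with rfl | rfl
          · exact Or.inr rfl
          · exact absurd rfl h.ne'
      have hda : d = a := by
        rcases ((hGA c d).mp hcd).2 with h | ⟨z, h1, h2⟩
        · rcases hNc' d h with rfl | rfl
          · rfl
          · exact absurd rfl nbd
        · rcases hNc' z h1 with rfl | rfl
          · rcases hNa d h2 with rfl | rfl
            · exact absurd rfl nbd
            · exact absurd rfl ncd
          · rcases hNb' d h2 with rfl | rfl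
            · rfl
            · exact absurd rfl ncd
      subst hda
      ext x
      simp only [Set.mem_diff, SimpleGraph.mem_neighborSet, Set.mem_insert_iff,
        Set.mem_singleton_iff]
      constructor
      · rintro ⟨h, hn⟩
        rcases hNa x h with rfl | rfl
        · exact absurd (Or.inr (Or.inl rfl)) hn
        · exact absurd (Or.inr (Or.inr rfl)) hn
      · rintro ⟨h, hn⟩
        have hcx := ((hGA c x).mp h).1
        rcases ((hGA c x).mp h).2 with h' | ⟨z, h1, h2⟩
        · rcases hNc' x h' with rfl | rfl
          · exact absurd (Or.inl rfl) hn
          · exact absurd (Or.inr (Or.inl rfl)) hn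
        · rcases hNc' z h1 with rfl | rfl
          · rcases hNa x h2 with rfl | rfl
            · exact absurd (Or.inr (Or.inl rfl)) hn
            · exact absurd rfl hcx
          · rcases hNb' x h2 with rfl | rfl
            · exact absurd (Or.inl rfl) hn
            · exact absurd rfl hcx
    · -- Case II : a–b ∈ H, a–c ∉ H
      have hbc' : H.Adj b c := by
        rcases ((hGA a c).mp hac).2 with h | ⟨z, h1, h2⟩
        · exact absurd h hac'
        · rcases hNa z h1 with rfl | rfl
          · exact h2
          · exact absurd h1 hac'
      have hNc' : ∀ z, H.Adj c z → z = b ∨ z = d := by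
        intro z h
        by_cases hz : z = b
        · exact Or.inl hz
        · rcases (hbA z).mp ((hGA b z).mpr
            ⟨fun e => hz e.symm, Or.inr ⟨c, hbc', h⟩⟩) with rfl | rfl | rfl
          · exact absurd h.symm hac'
          · exact absurd rfl h.ne'
          · exact Or.inr rfl
      rcases ((hGA c d).mp hcd).2 with hcd' | ⟨z, h1, h2⟩
      · -- c–d ∈ H
        ext x
        simp only [Set.mem_diff, SimpleGraph.mem_neighborSet, Set.mem_insert_iff,
          Set.mem_singleton_iff]
        constructor
        · rintro ⟨h, hn⟩
          refine ⟨(hGA c x).mpr ⟨?_, Or.inr ⟨d, hcd', h⟩⟩, ?_⟩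
          · intro e; exact hn (Or.inr (Or.inr e.symm))
          · rintro (rfl | rfl | rfl)
            · exact hn (Or.inl rfl)
            · exact hn (Or.inr (Or.inl rfl))
            · exact absurd rfl h.ne'
        · rintro ⟨h, hn⟩
          have hcx := ((hGA c x).mp h).1
          rcases ((hGA c x).mp h).2 with h' | ⟨z, h1, h2⟩
          · rcases hNc' x h' with rfl | rfl
            · exact absurd (Or.inr (Or.inl rfl)) hn
            · exact absurd (Or.inr (Or.inr rfl)) hn
          · rcases hNc' z h1 with rfl | rfl
            · rcases hNb' x h2 with rfl | rfl
              · exact absurd (Or.inl rfl) hn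
              · exact absurd rfl hcx
            · refine ⟨h2, ?_⟩
              rintro (rfl | rfl | rfl)
              · exact hn (Or.inl rfl)
              · exact hn (Or.inr (Or.inl rfl))
              · exact hcx rfl
      · -- common neighbor z of c and d
        rcases hNc' z h1 with rfl | rfl
        · -- z = b, so b–d ∈ H, hence by hNb', d = a or d = c
          rcases hNb' d h2 with rfl | rfl
          · -- d = a : both sides empty
            ext x
            simp only [Set.mem_diff, SimpleGraph.mem_neighborSet, Set.mem_insert_iff,
              Set.mem_singleton_iff]
            constructor
            · rintro ⟨h, hn⟩
              rcases hNa x h with rfl | rfl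
              · exact absurd (Or.inr (Or.inl rfl)) hn
              · exact absurd (Or.inr (Or.inr rfl)) hn
            · rintro ⟨h, hn⟩
              have hcx := ((hGA c x).mp h).1
              rcases ((hGA c x).mp h).2 with h' | ⟨z, hz1, hz2⟩
              · rcases hNc' x h' with rfl | rfl
                · exact absurd (Or.inr (Or.inl rfl)) hn
                · exact absurd (Or.inl rfl) hn
              · rcases hNc' z hz1 with rfl | rfl
                · rcases hNb' x hz2 with rfl | rfl
                  · exact absurd (Or.inl rfl) hn
                  · exact absurd rfl hcx
                · rcases hNa x hz2 with rfl | rfl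
                  · exact absurd (Or.inr (Or.inl rfl)) hn
                  · exact absurd rfl hcx
          · exact absurd rfl ncd
        · exact absurd rfl h2.ne
  · -- Case III : a–c ∈ H, a–b ∉ H
    have hac' : H.Adj a c := hB.resolve_left hab'
    have hcb' : H.Adj c b := by
      rcases ((hGA a b).mp hab).2 with h | ⟨z, h1, h2⟩
      · exact absurd h hab'
      · rcases hNa z h1 with rfl | rfl
        · exact absurd h1 hab'
        · exact h2
    have hNc' : ∀ z, H.Adj c z → z = a ∨ z = b := by
      intro z h
      by_cases hz : z = a
      · exact Or.inl hz
      · rcases (haA z).mp ((hGA a z).mpr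
          ⟨fun e => hz e.symm, Or.inr ⟨c, hac', h⟩⟩) with rfl | rfl
        · exact Or.inr rfl
        · exact absurd rfl h.ne'
    have hNb' : ∀ z, H.Adj b z → z = c ∨ z = d := by
      intro z h
      rcases hNb z h with rfl | rfl | rfl
      · exact absurd h.symm hab'
      · exact Or.inl rfl
      · exact Or.inr rfl
    -- Either d = a, or b–d ∈ H
    have hkey : d = a ∨ H.Adj b d := by
      rcases ((hGA c d).mp hcd).2 with h | ⟨z, h1, h2⟩
      · rcases hNc' d h with rfl | rfl
        · exact Or.inl rfl
        · exact absurd rfl nbd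
      · rcases hNc' z h1 with rfl | rfl
        · rcases hNa d h2 with rfl | rfl
          · exact absurd rfl nbd
          · exact absurd rfl ncd
        · exact Or.inr h2
    have hRHS : ∀ x, (graphSq H).Adj c x → x = a ∨ x = b ∨ x = d := by
      intro x h
      have hcx := ((hGA c x).mp h).1
      rcases ((hGA c x).mp h).2 with h' | ⟨z, h1, h2⟩
      · rcases hNc' x h' with rfl | rfl
        · exact Or.inl rfl
        · exact Or.inr (Or.inl rfl)
      · rcases hNc' z h1 with rfl | rfl
        · rcases hNa x h2 with rfl | rfl
          · exact Or.inr (Or.inl rfl)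
          · exact absurd rfl hcx
        · rcases hNb' x h2 with rfl | rfl
          · exact absurd rfl hcx
          · exact Or.inr (Or.inr rfl)
    rcases hkey with rfl | hbd'
    · -- d = a : both sides empty
      ext x
      simp only [Set.mem_diff, SimpleGraph.mem_neighborSet, Set.mem_insert_iff,
        Set.mem_singleton_iff]
      constructor
      · rintro ⟨h, hn⟩
        rcases hNa x h with rfl | rfl
        · exact absurd (Or.inr (Or.inl rfl)) hn
        · exact absurd (Or.inr (Or.inr rfl)) hn
      · rintro ⟨h, hn⟩
        rcases hRHS x h with rfl | rfl | rfl
        · exact absurd (Or.inl rfl) hn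
        · exact absurd (Or.inr (Or.inl rfl)) hn
        · exact absurd (Or.inl rfl) hn
    · -- b–d ∈ H : both sides empty
      have hNd' : ∀ z, H.Adj d z → z = a ∨ z = b ∨ z = c := by
        intro z h
        by_cases hz : z = b
        · exact Or.inr (Or.inl hz)
        · rcases (hbA z).mp ((hGA b z).mpr
            ⟨fun e => hz e.symm, Or.inr ⟨d, hbd', h⟩⟩) with rfl | rfl | rfl
          · exact Or.inl rfl
          · exact Or.inr (Or.inr rfl)
          · exact absurd rfl h.ne'
      ext x
      simp only [Set.mem_diff, SimpleGraph.mem_neighborSet, Set.mem_insert_iff,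
        Set.mem_singleton_iff]
      constructor
      · rintro ⟨h, hn⟩
        exact absurd (hNd' x h) hn
      · rintro ⟨h, hn⟩
        rcases hRHS x h with rfl | rfl | rfl
        · exact absurd (Or.inl rfl) hn
        · exact absurd (Or.inr (Or.inl rfl)) hn
        · exact absurd (Or.inr (Or.inr rfl)) hn
end
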